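/- With Φ_n(a) as defined by Φ_n(a) = Σ_{σ ∈ 𝔖_n} sgn(σ) 2^{ω(σ)} a^n ∫_{[−1/2,1/2]^n} ∏_j 𝟙_{[−1/(2a),1/(2a)]}(ξ_j − ξ_{σ^{−1}(j)}) dξ, one has Φ_3(a) = 0 for 0 < a ≤ 1/2 and Φ_3(a) = (2a − 1)^3 for a > 1/2. -/

import Mathlib

open MeasureTheory Real

/-- `Φ_n(a) = Σ_{σ ∈ 𝔖_n} sgn(σ) 2^{ω(σ)} a^n ∫_{[-1/2,1/2]^n}
∏_j 𝟙_{[-1/(2a),1/(2a)]}(ξ_j - ξ_{σ⁻¹(j)}) dξ`, where `ω(σ)` is the number of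
cycles of `σ` (fixed points counted as cycles). -/
noncomputable def Phi (n : ℕ) (a : ℝ) : ℝ :=
  ∑ σ : Equiv.Perm (Fin n),
    ((Equiv.Perm.sign σ : ℤ) : ℝ) *
      2 ^ (n - σ.support.card + σ.cycleType.card) * a ^ n *
      ∫ ξ in (Set.univ.pi fun _ : Fin n => Set.Icc (-(1:ℝ)/2) (1/2)),
        ∏ j : Fin n, (if |ξ j - ξ (σ⁻¹ j)| ≤ 1 / (2 * a) then (1:ℝ) else 0)

namespace Stmt14Aux

open Set

local notation "II" => Set.Icc (-(1:ℝ)/2) (1/2)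
local notation "cube" => (Set.univ.pi fun _ : Fin 3 => Set.Icc (-(1:ℝ)/2) (1/2))

lemma vol_II : volume II = 1 := by rw [Real.volume_Icc]; norm_num

lemma integrableOn_bdd {α : Type*} [MeasurableSpace α] {μ : Measure α} {s : Set α}
    (hs : μ s ≠ ⊤) {f : α → ℝ} (hf : Measurable f) (hb : ∀ x, ‖f x‖ ≤ 1) :
    IntegrableOn f s μ :=
  Measure.integrableOn_of_bounded hs hf.aestronglyMeasurable (Filter.Eventually.of_forall hb)

lemma cube_eq (f : ℝ → ℝ → ℝ → ℝ)
    (hm : Measurable fun p : ℝ × ℝ × ℝ => f p.1 p.2.1 p.2.2)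
    (hb : ∀ x y z, ‖f x y z‖ ≤ 1) :
    ∫ ξ in cube, f (ξ 0) (ξ 1) (ξ 2) = ∫ x in II, ∫ y in II, ∫ z in II, f x y z := by
  have h2 : MeasurePreserving (MeasurableEquiv.finTwoArrow : (Fin 2 → ℝ) ≃ᵐ ℝ × ℝ)
      volume volume := by
    have := measurePreserving_finTwoArrow (volume : Measure ℝ)
    rwa [← volume_pi, ← Measure.volume_eq_prod] at this
  set e : (Fin 3 → ℝ) ≃ᵐ ℝ × ℝ × ℝ :=
    (MeasurableEquiv.piFinSuccAbove (fun _ : Fin 3 => ℝ) 0).trans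
      (MeasurableEquiv.prodCongr (MeasurableEquiv.refl ℝ) MeasurableEquiv.finTwoArrow) with he
  have hep : MeasurePreserving e volume volume := by
    have hcomp : ⇑e = (Prod.map (id : ℝ → ℝ) MeasurableEquiv.finTwoArrow) ∘
        ⇑(MeasurableEquiv.piFinSuccAbove (fun _ : Fin 3 => ℝ) 0) := rfl
    have hmp : MeasurePreserving (Prod.map (id : ℝ → ℝ) ⇑MeasurableEquiv.finTwoArrow)
        ((volume : Measure ℝ).prod (volume : Measure (Fin 2 → ℝ)))
        ((volume : Measure ℝ).prod (volume : Measure (ℝ × ℝ))) :=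
      (MeasurePreserving.id volume).prod h2
    rw [← Measure.volume_eq_prod, ← Measure.volume_eq_prod] at hmp
    rw [hcomp]
    exact hmp.comp (volume_preserving_piFinSuccAbove (fun _ : Fin 3 => ℝ) 0)
  have hcube : cube = e ⁻¹' (II ×ˢ (II ×ˢ II)) := by
    ext ξ
    simp only [Set.mem_pi, Set.mem_univ, forall_true_left, Set.mem_preimage, Set.mem_prod]
    constructor
    · intro h; exact ⟨h 0, h 1, h 2⟩
    · rintro ⟨h0, h1, h2⟩ i; fin_cases i <;> first | exact h0 | exact h1 | exact h2
  rw [hcube]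
  rw [show (fun ξ : Fin 3 → ℝ => f (ξ 0) (ξ 1) (ξ 2))
      = fun ξ => (fun p : ℝ × ℝ × ℝ => f p.1 p.2.1 p.2.2) (e ξ) from rfl]
  rw [hep.setIntegral_preimage_emb e.measurableEmbedding
    (fun p : ℝ × ℝ × ℝ => f p.1 p.2.1 p.2.2) (II ×ˢ (II ×ˢ II))]
  have hIO : IntegrableOn (fun p : ℝ × ℝ × ℝ => f p.1 p.2.1 p.2.2) (II ×ˢ (II ×ˢ II)) volume := by
    apply integrableOn_bdd _ hm (fun p => hb _ _ _)
    rw [Measure.volume_eq_prod, Measure.prod_prod, Measure.volume_eq_prod, Measure.prod_prod,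
      vol_II]
    simp
  rw [Measure.volume_eq_prod] at hIO ⊢
  rw [setIntegral_prod _ hIO]
  apply setIntegral_congr_fun measurableSet_Icc
  intro x _
  have hIO2 : IntegrableOn (fun q : ℝ × ℝ => f x q.1 q.2) (II ×ˢ II) volume := by
    apply integrableOn_bdd _ (hm.comp (measurable_const.prodMk measurable_id)) (fun p => hb _ _ _)
    rw [Measure.volume_eq_prod, Measure.prod_prod, vol_II]; simp
  rw [Measure.volume_eq_prod] at hIO2
  exact setIntegral_prod _ hIO2

lemma ite_mul_indicator (c ρ : ℝ) (g : ℝ → ℝ) (t : ℝ) :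
    (if |c - t| ≤ ρ then (1:ℝ) else 0) * g t = (Icc (c-ρ) (c+ρ)).indicator g t := by
  by_cases h : |c - t| ≤ ρ
  · rw [if_pos h, one_mul, Set.indicator_of_mem]
    rw [abs_le] at h; exact Set.mem_Icc.2 ⟨by linarith [h.2], by linarith [h.1]⟩
  · rw [if_neg h, zero_mul, Set.indicator_of_notMem]
    intro hmem; rw [Set.mem_Icc] at hmem
    exact h (abs_le.2 ⟨by linarith [hmem.2], by linarith [hmem.1]⟩)

lemma ite_eq_indicator (c ρ : ℝ) (t : ℝ) :
    (if |c - t| ≤ ρ then (1:ℝ) else 0) = (Icc (c-ρ) (c+ρ)).indicator (fun _ => (1:ℝ)) t := by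
  simpa using ite_mul_indicator c ρ (fun _ => 1) t

lemma int_ite {S : Set ℝ} (hS : MeasurableSet S) (c ρ : ℝ) :
    ∫ t in S, (if |c - t| ≤ ρ then (1:ℝ) else 0) = (volume (S ∩ Icc (c-ρ) (c+ρ))).toReal := by
  simp_rw [ite_eq_indicator c ρ]
  rw [setIntegral_indicator measurableSet_Icc, setIntegral_const]
  simp
  rfl

lemma int_ite2 {S : Set ℝ} (hS : MeasurableSet S) (c d ρ : ℝ) :
    ∫ t in S, (if |c - t| ≤ ρ then (1:ℝ) else 0) * (if |d - t| ≤ ρ then (1:ℝ) else 0)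
      = (volume ((S ∩ Icc (c-ρ) (c+ρ)) ∩ Icc (d-ρ) (d+ρ))).toReal := by
  have : ∀ t : ℝ, (if |c - t| ≤ ρ then (1:ℝ) else 0) * (if |d - t| ≤ ρ then (1:ℝ) else 0)
      = (Icc (c-ρ) (c+ρ)).indicator (fun t => if |d - t| ≤ ρ then (1:ℝ) else 0) t := by
    intro t
    exact ite_mul_indicator c ρ (fun t => if |d - t| ≤ ρ then (1:ℝ) else 0) t
  simp_rw [this]
  rw [setIntegral_indicator measurableSet_Icc, int_ite (hS.inter measurableSet_Icc)]

lemma int_ite_mul {S : Set ℝ} (hS : MeasurableSet S) (c ρ : ℝ) (g : ℝ → ℝ) :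
    ∫ t in S, (if |c - t| ≤ ρ then (1:ℝ) else 0) * g t = ∫ t in S ∩ Icc (c-ρ) (c+ρ), g t := by
  rw [← setIntegral_indicator measurableSet_Icc]
  exact setIntegral_congr_fun hS fun t _ => ite_mul_indicator c ρ g t

lemma int_abs (p q : ℝ) : ∫ u in p..q, |u| = (q*|q| - p*|p|)/2 := by
  have h0 : ∀ b : ℝ, ∫ u in (0:ℝ)..b, |u| = b*|b|/2 := by
    intro b
    rcases le_or_gt 0 b with hb | hb
    · rw [intervalIntegral.integral_congr (g := fun u => u) fun u hu => by
        rw [Set.uIcc_of_le hb] at hu; exact abs_of_nonneg hu.1]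
      rw [integral_id, abs_of_nonneg hb]; ring
    · rw [intervalIntegral.integral_congr (g := fun u => -u) fun u hu => by
        rw [Set.uIcc_of_ge hb.le] at hu; exact abs_of_nonpos hu.2]
      rw [intervalIntegral.integral_neg, integral_id, abs_of_nonpos hb.le]; ring
  have hi : ∀ u v : ℝ, IntervalIntegrable (fun t : ℝ => |t|) volume u v :=
    fun u v => continuous_abs.intervalIntegrable u v
  have hadj := intervalIntegral.integral_add_adjacent_intervals (hi p 0) (hi 0 q)
  rw [← hadj, intervalIntegral.integral_symm, h0, h0]; ring

lemma int_abs_shift (c p q : ℝ) :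
    ∫ u in p..q, |u - c| = ((q-c)*|q-c| - (p-c)*|p-c|)/2 := by
  rw [intervalIntegral.integral_comp_sub_right (fun u => |u|) c, int_abs]

lemma Gval (r α β : ℝ) (hr : 0 < r) (hab : α ≤ β) :
    ∫ y in α..β, max (min β (y+r) - max α (y-r)) 0 =
      (β-α)*((β-α)+2*r)/2 - r^2/2 - ((β-α)-r)*|(β-α)-r|/2 := by
  have habs : ∀ u v : ℝ, min u v = (u + v - |u - v|)/2 := by
    intro u v
    rcases le_total u v with h | h
    · rw [min_eq_left h, abs_of_nonpos (by linarith)]; ring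
    · rw [min_eq_right h, abs_of_nonneg (by linarith)]; ring
  have habs' : ∀ u v : ℝ, max u v = (u + v + |u - v|)/2 := by
    intro u v
    rcases le_total u v with h | h
    · rw [max_eq_right h, abs_of_nonpos (by linarith)]; ring
    · rw [max_eq_left h, abs_of_nonneg (by linarith)]; ring
  have hcg : ∀ y ∈ Set.uIcc α β,
      max (min β (y+r) - max α (y-r)) 0
        = (β - α + 2*r)/2 - (|y - (β - r)| + |y - (α + r)|)/2 := by
    intro y hy
    rw [Set.uIcc_of_le hab] at hy
    have hge : max α (y-r) ≤ min β (y+r) := by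
      apply max_le
      · exact le_min hab (by linarith [hy.1])
      · exact le_min (by linarith [hy.2]) (by linarith)
    rw [max_eq_left (by linarith), habs, habs']
    have e1 : |β - (y + r)| = |y - (β - r)| := by rw [abs_sub_comm]; ring_nf
    have e2 : |α - (y - r)| = |y - (α + r)| := by rw [abs_sub_comm]; ring_nf
    rw [e1, e2]; ring
  rw [intervalIntegral.integral_congr hcg]
  have hi1 : IntervalIntegrable (fun y : ℝ => (|y - (β - r)| + |y - (α + r)|)/2) volume α β :=
    (by fun_prop : Continuous fun y : ℝ => (|y - (β - r)| + |y - (α + r)|)/2).intervalIntegrable _ _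
  have hA : ∫ y in α..β, (|y - (β - r)| + |y - (α + r)|)/2
      = (r^2 + ((β-α)-r)*|(β-α)-r|)/2 := by
    rw [intervalIntegral.integral_div]
    have i1 : IntervalIntegrable (fun y : ℝ => |y - (β - r)|) volume α β :=
      (by fun_prop : Continuous fun y : ℝ => |y - (β - r)|).intervalIntegrable _ _
    have i2 : IntervalIntegrable (fun y : ℝ => |y - (α + r)|) volume α β :=
      (by fun_prop : Continuous fun y : ℝ => |y - (α + r)|).intervalIntegrable _ _
    rw [intervalIntegral.integral_add i1 i2]
    rw [int_abs_shift, int_abs_shift]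
    have e1 : β - (β - r) = r := by ring
    have e2 : α - (β - r) = -((β - α) - r) := by ring
    have e3 : β - (α + r) = (β - α) - r := by ring
    have e4 : α - (α + r) = -r := by ring
    rw [e1, e2, e3, e4, abs_neg, abs_neg, abs_of_pos hr]
    ring
  rw [intervalIntegral.integral_sub intervalIntegrable_const hi1, hA,
    intervalIntegral.integral_const, smul_eq_mul]
  ring

lemma quad_int (c0 c1 c2 p q : ℝ) :
    ∫ x in p..q, (c0 + c1 * x + c2 * x ^ 2) =
      c0 * (q - p) + c1 * (q ^ 2 - p ^ 2) / 2 + c2 * (q ^ 3 - p ^ 3) / 3 := by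
  have i1 : IntervalIntegrable (fun x : ℝ => c0 + c1 * x) volume p q :=
    (by fun_prop : Continuous fun x : ℝ => c0 + c1 * x).intervalIntegrable _ _
  have i2 : IntervalIntegrable (fun x : ℝ => c2 * x ^ 2) volume p q :=
    (by fun_prop : Continuous fun x : ℝ => c2 * x ^ 2).intervalIntegrable _ _
  have i3 : IntervalIntegrable (fun x : ℝ => c1 * x) volume p q :=
    (by fun_prop : Continuous fun x : ℝ => c1 * x).intervalIntegrable _ _
  rw [intervalIntegral.integral_add i1 i2,
    intervalIntegral.integral_add intervalIntegrable_const i3,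
    intervalIntegral.integral_const, intervalIntegral.integral_const_mul,
    intervalIntegral.integral_const_mul, integral_id, integral_pow]
  push_cast; rw [smul_eq_mul]; ring

lemma W2 {r : ℝ} (hr : 0 < r) (hr1 : r < 1) :
    ∫ x in (-(1:ℝ)/2)..(1/2), max (min (1/2) (x+r) - max (-(1:ℝ)/2) (x-r)) 0
      = 2*r - r^2 := by
  rw [Gval r (-(1:ℝ)/2) (1/2) hr (by norm_num)]
  rw [show (1:ℝ)/2 - (-(1:ℝ)/2) = 1 by norm_num]
  rw [abs_of_nonneg (by linarith : (0:ℝ) ≤ 1 - r)]; ring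

lemma V3 {r : ℝ} (hr : 0 < r) (hr1 : r < 1) :
    ∫ x in (-(1:ℝ)/2)..(1/2),
      ((min (1/2) (x+r) - max (-(1:ℝ)/2) (x-r)) * ((min (1/2) (x+r) - max (-(1:ℝ)/2) (x-r)) + 2*r)/2
        - r^2/2
        - ((min (1/2) (x+r) - max (-(1:ℝ)/2) (x-r)) - r) * |(min (1/2) (x+r) - max (-(1:ℝ)/2) (x-r)) - r|/2)
      = 3*r^2 - 2*r^3 := by
  set E : ℝ → ℝ := fun x =>
      ((min (1/2) (x+r) - max (-(1:ℝ)/2) (x-r)) * ((min (1/2) (x+r) - max (-(1:ℝ)/2) (x-r)) + 2*r)/2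
        - r^2/2
        - ((min (1/2) (x+r) - max (-(1:ℝ)/2) (x-r)) - r) * |(min (1/2) (x+r) - max (-(1:ℝ)/2) (x-r)) - r|/2)
    with hE
  have hcont : Continuous E := by rw [hE]; fun_prop
  have hEi : ∀ u v : ℝ, IntervalIntegrable E volume u v := fun u v => hcont.intervalIntegrable u v
  rcases le_or_gt r (1/2) with hc | hc
  · rw [← intervalIntegral.integral_add_adjacent_intervals (hEi (-(1:ℝ)/2) (r-1/2)) (hEi (r-1/2) (1/2)),
      ← intervalIntegral.integral_add_adjacent_intervals (hEi (r-1/2) (1/2-r)) (hEi (1/2-r) (1/2))]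
    have e1 : ∫ x in (-(1:ℝ)/2)..(r-1/2), E x = 2*r^3 := by
      rw [intervalIntegral.integral_congr (g := fun x => (r + r^2) + (2*r) * x + 0 * x^2) ?_, quad_int]
      · ring
      · intro x hx
        rw [Set.uIcc_of_le (by linarith)] at hx
        obtain ⟨h1, h2⟩ := hx
        rw [hE]
        simp only
        rw [min_eq_right (by linarith : x + r ≤ 1/2),
          max_eq_left (by linarith : x - r ≤ -(1:ℝ)/2),
          abs_of_nonneg (by linarith : (0:ℝ) ≤ x + r - (-(1:ℝ)/2) - r)]
        ring
    have e2 : ∫ x in (r-1/2)..(1/2-r), E x = 3*r^2 * (1 - 2*r) := by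
      rw [intervalIntegral.integral_congr (g := fun x => (3*r^2) + 0 * x + 0 * x^2) ?_, quad_int]
      · ring
      · intro x hx
        rw [Set.uIcc_of_le (by linarith)] at hx
        obtain ⟨h1, h2⟩ := hx
        rw [hE]
        simp only
        rw [min_eq_right (by linarith : x + r ≤ 1/2),
          max_eq_right (by linarith : -(1:ℝ)/2 ≤ x - r),
          abs_of_nonneg (by linarith : (0:ℝ) ≤ x + r - (x - r) - r)]
        ring
    have e3 : ∫ x in (1/2-r)..(1/2:ℝ), E x = 2*r^3 := by
      rw [intervalIntegral.integral_congr (g := fun x => (r + r^2) + (-(2*r)) * x + 0 * x^2) ?_, quad_int]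
      · ring
      · intro x hx
        rw [Set.uIcc_of_le (by linarith)] at hx
        obtain ⟨h1, h2⟩ := hx
        rw [hE]
        simp only
        rw [min_eq_left (by linarith : (1:ℝ)/2 ≤ x + r),
          max_eq_right (by linarith : -(1:ℝ)/2 ≤ x - r),
          abs_of_nonneg (by linarith : (0:ℝ) ≤ 1/2 - (x - r) - r)]
        ring
    rw [e1, e2, e3]; ring
  · rw [← intervalIntegral.integral_add_adjacent_intervals (hEi (-(1:ℝ)/2) (1/2-r)) (hEi (1/2-r) (1/2)),
      ← intervalIntegral.integral_add_adjacent_intervals (hEi (1/2-r) (r-1/2)) (hEi (r-1/2) (1/2))]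
    have e1 : ∫ x in (-(1:ℝ)/2)..(1/2-r), E x = r*(1-r)^2 + r^2*(1-r) := by
      rw [intervalIntegral.integral_congr (g := fun x => (r + r^2) + (2*r) * x + 0 * x^2) ?_, quad_int]
      · ring
      · intro x hx
        rw [Set.uIcc_of_le (by linarith)] at hx
        obtain ⟨h1, h2⟩ := hx
        rw [hE]
        simp only
        rw [min_eq_right (by linarith : x + r ≤ 1/2),
          max_eq_left (by linarith : x - r ≤ -(1:ℝ)/2),
          abs_of_nonneg (by linarith : (0:ℝ) ≤ x + r - (-(1:ℝ)/2) - r)]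
        ring
    have e2 : ∫ x in (1/2-r)..(r-1/2), E x = (2*r - r^2) * (2*r - 1) := by
      rw [intervalIntegral.integral_congr (g := fun x => (2*r - r^2) + 0 * x + 0 * x^2) ?_, quad_int]
      · ring
      · intro x hx
        rw [Set.uIcc_of_le (by linarith)] at hx
        obtain ⟨h1, h2⟩ := hx
        rw [hE]
        simp only
        rw [min_eq_left (by linarith : (1:ℝ)/2 ≤ x + r),
          max_eq_left (by linarith : x - r ≤ -(1:ℝ)/2),
          abs_of_nonneg (by linarith : (0:ℝ) ≤ 1/2 - (-(1:ℝ)/2) - r)]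
        ring
    have e3 : ∫ x in (r-1/2)..(1/2:ℝ), E x = r*(1-r)^2 + r^2*(1-r) := by
      rw [intervalIntegral.integral_congr (g := fun x => (r + r^2) + (-(2*r)) * x + 0 * x^2) ?_, quad_int]
      · ring
      · intro x hx
        rw [Set.uIcc_of_le (by linarith)] at hx
        obtain ⟨h1, h2⟩ := hx
        rw [hE]
        simp only
        rw [min_eq_left (by linarith : (1:ℝ)/2 ≤ x + r),
          max_eq_right (by linarith : -(1:ℝ)/2 ≤ x - r),
          abs_of_nonneg (by linarith : (0:ℝ) ≤ 1/2 - (x - r) - r)]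
        ring
    rw [e1, e2, e3]; ring

lemma meas_ite {α : Type*} [MeasurableSpace α] {g h : α → ℝ} (hg : Measurable g)
    (hh : Measurable h) (ρ : ℝ) :
    Measurable fun p => if |g p - h p| ≤ ρ then (1:ℝ) else 0 :=
  Measurable.ite (measurableSet_le ((hg.sub hh).abs) measurable_const)
    measurable_const measurable_const

lemma ite_bd (P : Prop) [Decidable P] : ‖if P then (1:ℝ) else 0‖ ≤ 1 := by
  by_cases h : P <;> simp [h]

lemma int_const_II (c : ℝ) : ∫ _ in II, c = c := by
  rw [setIntegral_const, measureReal_def, vol_II]; simp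

lemma Jone : ∫ _ in cube, (1:ℝ) = 1 := by
  rw [setIntegral_const, measureReal_def, volume_pi_pi, vol_II]
  simp

lemma mid_W {r : ℝ} (x : ℝ) :
    ∫ y in II, (if |x - y| ≤ r then (1:ℝ) else 0)
      = max (min (1/2) (x+r) - max (-(1:ℝ)/2) (x-r)) 0 := by
  rw [int_ite measurableSet_Icc, Set.Icc_inter_Icc, Real.volume_Icc, ENNReal.toReal_ofReal']

lemma outer_W {r : ℝ} (hr : 0 < r) (hr1 : r < 1) :
    ∫ x in II, max (min (1/2) (x+r) - max (-(1:ℝ)/2) (x-r)) 0 = 2*r - r^2 := by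
  rw [MeasureTheory.integral_Icc_eq_integral_Ioc,
    ← intervalIntegral.integral_of_le (by norm_num : -(1:ℝ)/2 ≤ 1/2)]
  exact W2 hr hr1

lemma Jt01 {r : ℝ} (hr : 0 < r) (hr1 : r < 1) :
    ∫ ξ in cube, (if |ξ 0 - ξ 1| ≤ r then (1:ℝ) else 0) = 2*r - r^2 := by
  rw [cube_eq (fun x y _ => if |x - y| ≤ r then (1:ℝ) else 0)
    (meas_ite measurable_fst (measurable_fst.comp measurable_snd) r)
    (fun x y z => ite_bd _)]
  simp_rw [int_const_II, mid_W (r := r)]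
  exact outer_W hr hr1

lemma Jt02 {r : ℝ} (hr : 0 < r) (hr1 : r < 1) :
    ∫ ξ in cube, (if |ξ 0 - ξ 2| ≤ r then (1:ℝ) else 0) = 2*r - r^2 := by
  rw [cube_eq (fun x _ z => if |x - z| ≤ r then (1:ℝ) else 0)
    (meas_ite measurable_fst (measurable_snd.comp measurable_snd) r)
    (fun x y z => ite_bd _)]
  simp_rw [mid_W (r := r), int_const_II]
  exact outer_W hr hr1

lemma Jt12 {r : ℝ} (hr : 0 < r) (hr1 : r < 1) :
    ∫ ξ in cube, (if |ξ 1 - ξ 2| ≤ r then (1:ℝ) else 0) = 2*r - r^2 := by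
  rw [cube_eq (fun _ y z => if |y - z| ≤ r then (1:ℝ) else 0)
    (meas_ite (measurable_fst.comp measurable_snd) (measurable_snd.comp measurable_snd) r)
    (fun x y z => ite_bd _)]
  simp_rw [mid_W (r := r), outer_W hr hr1, int_const_II]

lemma Jc {r : ℝ} (hr : 0 < r) (hr1 : r < 1) :
    ∫ ξ in cube, ((if |ξ 0 - ξ 1| ≤ r then (1:ℝ) else 0) *
      ((if |ξ 1 - ξ 2| ≤ r then (1:ℝ) else 0) * (if |ξ 0 - ξ 2| ≤ r then (1:ℝ) else 0)))
      = 3*r^2 - 2*r^3 := by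
  rw [cube_eq (fun x y z => (if |x - y| ≤ r then (1:ℝ) else 0) *
      ((if |y - z| ≤ r then (1:ℝ) else 0) * (if |x - z| ≤ r then (1:ℝ) else 0)))
    (((meas_ite measurable_fst (measurable_fst.comp measurable_snd) r)).mul
      (((meas_ite (measurable_fst.comp measurable_snd) (measurable_snd.comp measurable_snd) r)).mul
        ((meas_ite measurable_fst (measurable_snd.comp measurable_snd) r))))
    (fun x y z => by
      by_cases h1 : |x - y| ≤ r <;> by_cases h2 : |y - z| ≤ r <;> by_cases h3 : |x - z| ≤ r <;>
        simp [h1, h2, h3])]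
  have hz : ∀ x y : ℝ, (∫ z in II, ((if |x - y| ≤ r then (1:ℝ) else 0) *
      ((if |y - z| ≤ r then (1:ℝ) else 0) * (if |x - z| ≤ r then (1:ℝ) else 0))))
      = (if |x - y| ≤ r then (1:ℝ) else 0) *
        (volume ((II ∩ Icc (x-r) (x+r)) ∩ Icc (y-r) (y+r))).toReal := by
    intro x y
    rw [MeasureTheory.integral_const_mul, int_ite2 measurableSet_Icc y x r,
      Set.inter_right_comm]
  simp_rw [hz]
  have hy : Set.EqOn (fun x => ∫ y in II, (if |x - y| ≤ r then (1:ℝ) else 0) *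
        (volume ((II ∩ Icc (x-r) (x+r)) ∩ Icc (y-r) (y+r))).toReal)
      (fun x =>
        ((min (1/2) (x+r) - max (-(1:ℝ)/2) (x-r)) * ((min (1/2) (x+r) - max (-(1:ℝ)/2) (x-r)) + 2*r)/2
        - r^2/2
        - ((min (1/2) (x+r) - max (-(1:ℝ)/2) (x-r)) - r) * |(min (1/2) (x+r) - max (-(1:ℝ)/2) (x-r)) - r|/2))
      II := by
    intro x hx
    rw [Set.mem_Icc] at hx
    simp only
    rw [int_ite_mul measurableSet_Icc x r
      (fun y => (volume ((II ∩ Icc (x-r) (x+r)) ∩ Icc (y-r) (y+r))).toReal)]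
    rw [Set.Icc_inter_Icc]
    simp_rw [Set.Icc_inter_Icc, Real.volume_Icc, ENNReal.toReal_ofReal']
    have hAB : max (-(1:ℝ)/2) (x-r) ≤ min (1/2) (x+r) := by
      apply max_le
      · exact le_min (by norm_num) (by linarith [hx.1])
      · exact le_min (by linarith [hx.2]) (by linarith)
    rw [MeasureTheory.integral_Icc_eq_integral_Ioc,
      ← intervalIntegral.integral_of_le hAB, Gval r _ _ hr hAB]
  rw [setIntegral_congr_fun measurableSet_Icc hy]
  rw [MeasureTheory.integral_Icc_eq_integral_Ioc,
    ← intervalIntegral.integral_of_le (by norm_num : -(1:ℝ)/2 ≤ 1/2)]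
  exact V3 hr hr1

lemma Phi3_expand (a : ℝ) (ha : 0 < a) :
    Phi 3 a = a^3 * (8
      - 4 * ((∫ ξ in cube, if |ξ 0 - ξ 1| ≤ 1/(2*a) then (1:ℝ) else 0)
           + (∫ ξ in cube, if |ξ 0 - ξ 2| ≤ 1/(2*a) then (1:ℝ) else 0)
           + (∫ ξ in cube, if |ξ 1 - ξ 2| ≤ 1/(2*a) then (1:ℝ) else 0))
      + 4 * (∫ ξ in cube, (if |ξ 0 - ξ 1| ≤ 1/(2*a) then (1:ℝ) else 0) *
          ((if |ξ 1 - ξ 2| ≤ 1/(2*a) then (1:ℝ) else 0) *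
           (if |ξ 0 - ξ 2| ≤ 1/(2*a) then (1:ℝ) else 0)))) := by
  have h0 : (0:ℝ) ≤ 1/(2*a) := by positivity
  rw [Phi]
  rw [show (Finset.univ : Finset (Equiv.Perm (Fin 3))) =
      {1, Equiv.swap 0 1, Equiv.swap 0 2, Equiv.swap 1 2,
       Equiv.swap 0 1 * Equiv.swap 0 2, Equiv.swap 0 2 * Equiv.swap 0 1} from by decide]
  rw [Finset.sum_insert (by decide), Finset.sum_insert (by decide),
    Finset.sum_insert (by decide), Finset.sum_insert (by decide),
    Finset.sum_insert (by decide), Finset.sum_singleton]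
  have n1 : (fun ξ : Fin 3 → ℝ =>
      ∏ j : Fin 3, if |ξ j - ξ ((1 : Equiv.Perm (Fin 3))⁻¹ j)| ≤ 1/(2*a) then (1:ℝ) else 0)
      = fun _ => (1:ℝ) := by
    funext ξ
    simp [Fin.prod_univ_three, sub_self, abs_zero, h0, ha.le]
  have n2 : (fun ξ : Fin 3 → ℝ =>
      ∏ j : Fin 3, if |ξ j - ξ ((Equiv.swap 0 1 : Equiv.Perm (Fin 3))⁻¹ j)| ≤ 1/(2*a) then (1:ℝ) else 0)
      = fun ξ => if |ξ 0 - ξ 1| ≤ 1/(2*a) then (1:ℝ) else 0 := by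
    funext ξ
    rw [Fin.prod_univ_three,
      show (Equiv.swap 0 1 : Equiv.Perm (Fin 3))⁻¹ 0 = 1 from by decide,
      show (Equiv.swap 0 1 : Equiv.Perm (Fin 3))⁻¹ 1 = 0 from by decide,
      show (Equiv.swap 0 1 : Equiv.Perm (Fin 3))⁻¹ 2 = 2 from by decide,
      sub_self, abs_zero, if_pos h0, mul_one, abs_sub_comm (ξ 1) (ξ 0)]
    by_cases h : |ξ 0 - ξ 1| ≤ 1/(2*a) <;>
      simp only [h, if_true, if_false, ite_true, ite_false, mul_one, one_mul, mul_zero, zero_mul]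
  have n3 : (fun ξ : Fin 3 → ℝ =>
      ∏ j : Fin 3, if |ξ j - ξ ((Equiv.swap 0 2 : Equiv.Perm (Fin 3))⁻¹ j)| ≤ 1/(2*a) then (1:ℝ) else 0)
      = fun ξ => if |ξ 0 - ξ 2| ≤ 1/(2*a) then (1:ℝ) else 0 := by
    funext ξ
    rw [Fin.prod_univ_three,
      show (Equiv.swap 0 2 : Equiv.Perm (Fin 3))⁻¹ 0 = 2 from by decide,
      show (Equiv.swap 0 2 : Equiv.Perm (Fin 3))⁻¹ 1 = 1 from by decide,
      show (Equiv.swap 0 2 : Equiv.Perm (Fin 3))⁻¹ 2 = 0 from by decide,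
      sub_self, abs_zero, if_pos h0, abs_sub_comm (ξ 2) (ξ 0)]
    by_cases h : |ξ 0 - ξ 2| ≤ 1/(2*a) <;>
      simp only [h, if_true, if_false, ite_true, ite_false, mul_one, one_mul, mul_zero, zero_mul]
  have n4 : (fun ξ : Fin 3 → ℝ =>
      ∏ j : Fin 3, if |ξ j - ξ ((Equiv.swap 1 2 : Equiv.Perm (Fin 3))⁻¹ j)| ≤ 1/(2*a) then (1:ℝ) else 0)
      = fun ξ => if |ξ 1 - ξ 2| ≤ 1/(2*a) then (1:ℝ) else 0 := by
    funext ξ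
    rw [Fin.prod_univ_three,
      show (Equiv.swap 1 2 : Equiv.Perm (Fin 3))⁻¹ 0 = 0 from by decide,
      show (Equiv.swap 1 2 : Equiv.Perm (Fin 3))⁻¹ 1 = 2 from by decide,
      show (Equiv.swap 1 2 : Equiv.Perm (Fin 3))⁻¹ 2 = 1 from by decide,
      sub_self, abs_zero, if_pos h0, abs_sub_comm (ξ 2) (ξ 1)]
    by_cases h : |ξ 1 - ξ 2| ≤ 1/(2*a) <;>
      simp only [h, if_true, if_false, ite_true, ite_false, mul_one, one_mul, mul_zero, zero_mul]
  have n5 : (fun ξ : Fin 3 → ℝ =>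
      ∏ j : Fin 3, if |ξ j - ξ ((Equiv.swap 0 1 * Equiv.swap 0 2 : Equiv.Perm (Fin 3))⁻¹ j)| ≤ 1/(2*a) then (1:ℝ) else 0)
      = fun ξ => (if |ξ 0 - ξ 1| ≤ 1/(2*a) then (1:ℝ) else 0) *
          ((if |ξ 1 - ξ 2| ≤ 1/(2*a) then (1:ℝ) else 0) *
           (if |ξ 0 - ξ 2| ≤ 1/(2*a) then (1:ℝ) else 0)) := by
    funext ξ
    rw [Fin.prod_univ_three,
      show (Equiv.swap 0 1 * Equiv.swap 0 2 : Equiv.Perm (Fin 3))⁻¹ 0 = 1 from by decide,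
      show (Equiv.swap 0 1 * Equiv.swap 0 2 : Equiv.Perm (Fin 3))⁻¹ 1 = 2 from by decide,
      show (Equiv.swap 0 1 * Equiv.swap 0 2 : Equiv.Perm (Fin 3))⁻¹ 2 = 0 from by decide,
      abs_sub_comm (ξ 2) (ξ 0)]
    ring
  have n6 : (fun ξ : Fin 3 → ℝ =>
      ∏ j : Fin 3, if |ξ j - ξ ((Equiv.swap 0 2 * Equiv.swap 0 1 : Equiv.Perm (Fin 3))⁻¹ j)| ≤ 1/(2*a) then (1:ℝ) else 0)
      = fun ξ => (if |ξ 0 - ξ 1| ≤ 1/(2*a) then (1:ℝ) else 0) *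
          ((if |ξ 1 - ξ 2| ≤ 1/(2*a) then (1:ℝ) else 0) *
           (if |ξ 0 - ξ 2| ≤ 1/(2*a) then (1:ℝ) else 0)) := by
    funext ξ
    rw [Fin.prod_univ_three,
      show (Equiv.swap 0 2 * Equiv.swap 0 1 : Equiv.Perm (Fin 3))⁻¹ 0 = 2 from by decide,
      show (Equiv.swap 0 2 * Equiv.swap 0 1 : Equiv.Perm (Fin 3))⁻¹ 1 = 0 from by decide,
      show (Equiv.swap 0 2 * Equiv.swap 0 1 : Equiv.Perm (Fin 3))⁻¹ 2 = 1 from by decide,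
      abs_sub_comm (ξ 1) (ξ 0), abs_sub_comm (ξ 2) (ξ 1)]
    ring
  rw [n1, n2, n3, n4, n5, n6]
  have g1 : Equiv.Perm.sign (1 : Equiv.Perm (Fin 3)) = 1 := by decide
  have g2 : Equiv.Perm.sign (Equiv.swap (0:Fin 3) 1) = -1 := by decide
  have g3 : Equiv.Perm.sign (Equiv.swap (0:Fin 3) 2) = -1 := by decide
  have g4 : Equiv.Perm.sign (Equiv.swap (1:Fin 3) 2) = -1 := by decide
  have g5 : Equiv.Perm.sign (Equiv.swap (0:Fin 3) 1 * Equiv.swap (0:Fin 3) 2) = 1 := by decide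
  have g6 : Equiv.Perm.sign (Equiv.swap (0:Fin 3) 2 * Equiv.swap (0:Fin 3) 1) = 1 := by decide
  have s1 : (1 : Equiv.Perm (Fin 3)).support.card = 0 := by decide
  have s2 : (Equiv.swap (0:Fin 3) 1).support.card = 2 := by decide
  have s3 : (Equiv.swap (0:Fin 3) 2).support.card = 2 := by decide
  have s4 : (Equiv.swap (1:Fin 3) 2).support.card = 2 := by decide
  have s5 : (Equiv.swap (0:Fin 3) 1 * Equiv.swap (0:Fin 3) 2).support.card = 3 := by decide
  have s6 : (Equiv.swap (0:Fin 3) 2 * Equiv.swap (0:Fin 3) 1).support.card = 3 := by decide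
  have c1 : Multiset.card (1 : Equiv.Perm (Fin 3)).cycleType = 0 := by decide
  have c2 : Multiset.card (Equiv.swap (0:Fin 3) 1).cycleType = 1 := by decide
  have c3 : Multiset.card (Equiv.swap (0:Fin 3) 2).cycleType = 1 := by decide
  have c4 : Multiset.card (Equiv.swap (1:Fin 3) 2).cycleType = 1 := by decide
  have c5 : Multiset.card (Equiv.swap (0:Fin 3) 1 * Equiv.swap (0:Fin 3) 2).cycleType = 1 := by decide
  have c6 : Multiset.card (Equiv.swap (0:Fin 3) 2 * Equiv.swap (0:Fin 3) 1).cycleType = 1 := by decide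
  rw [g1, g2, g3, g4, g5, g6, s1, s2, s3, s4, s5, s6, c1, c2, c3, c4, c5, c6]
  rw [show ∫ _ in cube, (1:ℝ) = 1 from Jone]
  push_cast
  norm_num
  ring

end Stmt14Aux

/-- `Φ₃(a) = 0` for `0 < a ≤ 1/2` and `Φ₃(a) = (2a-1)³` for `a > 1/2`. -/
theorem stmt14 (a : ℝ) (ha : 0 < a) :
    (a ≤ 1/2 → Phi 3 a = 0) ∧
    (1/2 < a → Phi 3 a = (2 * a - 1) ^ 3) := by
  constructor
  · intro ha2
    rw [Stmt14Aux.Phi3_expand a ha]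
    have h1r : (1:ℝ) ≤ 1/(2*a) := by
      rw [le_div_iff₀ (by linarith)]; linarith
    have hcubem : MeasurableSet (Set.univ.pi fun _ : Fin 3 => Set.Icc (-(1:ℝ)/2) (1/2)) :=
      MeasurableSet.univ_pi fun _ => measurableSet_Icc
    have habs : ∀ (ξ : Fin 3 → ℝ), ξ ∈ (Set.univ.pi fun _ : Fin 3 => Set.Icc (-(1:ℝ)/2) (1/2)) →
        ∀ i j : Fin 3, |ξ i - ξ j| ≤ 1/(2*a) := by
      intro ξ hξ i j
      simp only [Set.mem_pi, Set.mem_univ, forall_true_left] at hξ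
      have hi := hξ i; have hj := hξ j
      rw [Set.mem_Icc] at hi hj
      have : |ξ i - ξ j| ≤ 1 := abs_le.2 ⟨by linarith [hi.1, hj.2], by linarith [hi.2, hj.1]⟩
      linarith
    have e1 : (∫ ξ in (Set.univ.pi fun _ : Fin 3 => Set.Icc (-(1:ℝ)/2) (1/2)),
        if |ξ 0 - ξ 1| ≤ 1/(2*a) then (1:ℝ) else 0) = 1 := by
      rw [setIntegral_congr_fun hcubem (g := fun _ => (1:ℝ))
        (fun ξ hξ => if_pos (habs ξ hξ 0 1))]
      exact Stmt14Aux.Jone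
    have e2 : (∫ ξ in (Set.univ.pi fun _ : Fin 3 => Set.Icc (-(1:ℝ)/2) (1/2)),
        if |ξ 0 - ξ 2| ≤ 1/(2*a) then (1:ℝ) else 0) = 1 := by
      rw [setIntegral_congr_fun hcubem (g := fun _ => (1:ℝ))
        (fun ξ hξ => if_pos (habs ξ hξ 0 2))]
      exact Stmt14Aux.Jone
    have e3 : (∫ ξ in (Set.univ.pi fun _ : Fin 3 => Set.Icc (-(1:ℝ)/2) (1/2)),
        if |ξ 1 - ξ 2| ≤ 1/(2*a) then (1:ℝ) else 0) = 1 := by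
      rw [setIntegral_congr_fun hcubem (g := fun _ => (1:ℝ))
        (fun ξ hξ => if_pos (habs ξ hξ 1 2))]
      exact Stmt14Aux.Jone
    have e4 : (∫ ξ in (Set.univ.pi fun _ : Fin 3 => Set.Icc (-(1:ℝ)/2) (1/2)),
        (if |ξ 0 - ξ 1| ≤ 1/(2*a) then (1:ℝ) else 0) *
          ((if |ξ 1 - ξ 2| ≤ 1/(2*a) then (1:ℝ) else 0) *
           (if |ξ 0 - ξ 2| ≤ 1/(2*a) then (1:ℝ) else 0))) = 1 := by
      rw [setIntegral_congr_fun hcubem (g := fun _ => (1:ℝ)) (fun ξ hξ => by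
        rw [if_pos (habs ξ hξ 0 1), if_pos (habs ξ hξ 1 2), if_pos (habs ξ hξ 0 2)]
        norm_num)]
      exact Stmt14Aux.Jone
    rw [e1, e2, e3, e4]
    ring
  · intro ha2
    have hr : 0 < 1/(2*a) := by positivity
    have hr1 : 1/(2*a) < 1 := by
      rw [div_lt_one (by linarith)]; linarith
    rw [Stmt14Aux.Phi3_expand a ha, Stmt14Aux.Jt01 hr hr1, Stmt14Aux.Jt02 hr hr1,
      Stmt14Aux.Jt12 hr hr1, Stmt14Aux.Jc hr hr1]
    have h2a : (2*a) ≠ 0 := by positivity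
    field_simp
    ring
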